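/- Suppose r < σ²/2, L > 0 and b > L with b > 1. Then for every y ∈ [1, b], (b^α (b − L) p₁ p₂ / (p₁ b^{p₂} − p₂ b^{p₁}))·((p₂ − 1) y^{p₂ − 2} − (p₁ − 1) y^{p₁ − 2}) − (y^{α − 2}/σ⁴)·((2r − σ²)(2ry + L(2σ² − 2r))) > 0; in particular the difference h(y) = V̂(y) − (y − L)y^α between the candidate value function V̂(y) = ((b^{α+1} − Lb^α)/(p₁ b^{p₂} − p₂ b^{p₁}))(p₁ y^{p₂} − p₂ y^{p₁}) and the (extended) gain function is strictly convex on [1, b]. -/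
import Mathlib

set_option maxHeartbeats 1000000


/-- Suppose `r < σ²/2`, `L > 0`, `b > L`, `b > 1`.  Then for every
`y ∈ [1, b]`,
`(b^α (b − L) p₁ p₂/(p₁ b^(p₂) − p₂ b^(p₁)))·((p₂ − 1)y^(p₂−2) − (p₁ − 1)y^(p₁−2))
  − (y^(α−2)/σ⁴)·((2r − σ²)(2ry + L(2σ² − 2r))) > 0`;
in particular `h(y) = V̂(y) − (y − L)y^α` is strictly convex on `[1, b]`. -/
theorem stmt_10 (r σ lam α p₁ p₂ b L : ℝ) (V h : ℝ → ℝ)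
    (hr : 0 < r) (hσ : 0 < σ) (hlam : 0 < lam)
    (hα : α = 2*r/σ^2 - 1)
    (hp₁ : p₁ = ((r + σ^2/2) + Real.sqrt ((r + σ^2/2)^2 + 2*lam*σ^2)) / σ^2)
    (hp₂ : p₂ = ((r + σ^2/2) - Real.sqrt ((r + σ^2/2)^2 + 2*lam*σ^2)) / σ^2)
    (hdrift : r < σ^2/2) (hL : 0 < L) (hbL : L < b) (hb1 : 1 < b)
    (hV : ∀ y : ℝ, V y = ((b^(α+1) - L * b^α) / (p₁ * b^p₂ - p₂ * b^p₁))
      * (p₁ * y^p₂ - p₂ * y^p₁))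
    (hh : ∀ y : ℝ, h y = V y - (y - L) * y^α) :
    (∀ y ∈ Set.Icc (1:ℝ) b,
      0 < (b^α * (b - L) * p₁ * p₂ / (p₁ * b^p₂ - p₂ * b^p₁))
            * ((p₂ - 1) * y^(p₂-2) - (p₁ - 1) * y^(p₁-2))
          - (y^(α-2)/σ^4) * ((2*r - σ^2) * (2*r*y + L * (2*σ^2 - 2*r)))) ∧
    StrictConvexOn ℝ (Set.Icc (1:ℝ) b) h := by
  have hσ2 : (0:ℝ) < σ^2 := by positivity
  have hb0 : (0:ℝ) < b := lt_trans one_pos hb1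
  set A : ℝ := r + σ^2/2 with hA
  set S : ℝ := A^2 + 2*lam*σ^2 with hS
  clear_value A S
  have hA0 : 0 < A := by rw [hA]; positivity
  have hS0 : (0:ℝ) < S := by rw [hS, hA]; positivity
  -- sqrt S bounds
  have hsqA : A < Real.sqrt S := by
    have h1 : A^2 < S := by rw [hS]; nlinarith
    have := Real.sqrt_lt_sqrt (sq_nonneg A) h1
    rwa [Real.sqrt_sq hA0.le] at this
  have hsqB : σ^2/2 - r < Real.sqrt S := by
    have h1 : (σ^2/2 - r)^2 < S := by rw [hS, hA]; nlinarith
    have := Real.sqrt_lt_sqrt (sq_nonneg _) h1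
    rwa [Real.sqrt_sq (by linarith)] at this
  have hp2neg : p₂ < 0 := by
    rw [hp₂]
    apply div_neg_of_neg_of_pos _ hσ2
    linarith
  have hp1one : 1 < p₁ := by
    rw [hp₁, lt_div_iff₀ hσ2]
    have hAe : A = r + σ^2/2 := hA
    linarith
  have hp1pos : 0 < p₁ := lt_trans one_pos hp1one
  have hD : 0 < p₁ * b^p₂ - p₂ * b^p₁ := by
    have h1 : 0 < p₁ * b^p₂ := mul_pos hp1pos (Real.rpow_pos_of_pos hb0 _)
    have h2 : p₂ * b^p₁ < 0 := mul_neg_of_neg_of_pos hp2neg (Real.rpow_pos_of_pos hb0 _)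
    linarith
  have hCneg : b^α * (b - L) * p₁ * p₂ / (p₁ * b^p₂ - p₂ * b^p₁) < 0 := by
    apply div_neg_of_neg_of_pos _ hD
    have : 0 < b^α * (b - L) * p₁ := by
      have := Real.rpow_pos_of_pos hb0 α
      have hbl : 0 < b - L := by linarith
      positivity
    exact mul_neg_of_pos_of_neg this hp2neg
  -- part 1
  have key : ∀ y ∈ Set.Icc (1:ℝ) b,
      0 < (b^α * (b - L) * p₁ * p₂ / (p₁ * b^p₂ - p₂ * b^p₁))
            * ((p₂ - 1) * y^(p₂-2) - (p₁ - 1) * y^(p₁-2))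
          - (y^(α-2)/σ^4) * ((2*r - σ^2) * (2*r*y + L * (2*σ^2 - 2*r))) := by
    intro y hy
    have hy0 : 0 < y := lt_of_lt_of_le one_pos hy.1
    have hbr : (p₂ - 1) * y^(p₂-2) - (p₁ - 1) * y^(p₁-2) < 0 := by
      have h1 : (p₂ - 1) * y^(p₂-2) < 0 :=
        mul_neg_of_neg_of_pos (by linarith) (Real.rpow_pos_of_pos hy0 _)
      have h2 : 0 < (p₁ - 1) * y^(p₁-2) :=
        mul_pos (by linarith) (Real.rpow_pos_of_pos hy0 _)
      linarith
    have t1 : 0 < (b^α * (b - L) * p₁ * p₂ / (p₁ * b^p₂ - p₂ * b^p₁))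
        * ((p₂ - 1) * y^(p₂-2) - (p₁ - 1) * y^(p₁-2)) := mul_pos_of_neg_of_neg hCneg hbr
    have t2 : (y^(α-2)/σ^4) * ((2*r - σ^2) * (2*r*y + L * (2*σ^2 - 2*r))) < 0 := by
      apply mul_neg_of_pos_of_neg
      · have := Real.rpow_pos_of_pos hy0 (α-2)
        positivity
      · apply mul_neg_of_neg_of_pos (by linarith)
        nlinarith
    linarith
  refine ⟨key, ?_⟩
  -- the explicit function and its derivatives
  set K : ℝ := (b^(α+1) - L * b^α) / (p₁ * b^p₂ - p₂ * b^p₁) with hKdef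
  have hfun : ∀ y : ℝ, h y = K * (p₁ * y^p₂ - p₂ * y^p₁) - (y - L) * y^α := by
    intro y; rw [hh, hV]
  set F' : ℝ → ℝ := fun x => K * (p₁ * (p₂ * x^(p₂-1)) - p₂ * (p₁ * x^(p₁-1)))
      - (1 * x^α + (x - L) * (α * x^(α-1))) with hF'def
  have hder : ∀ x : ℝ, 0 < x → HasDerivAt h (F' x) x := by
    intro x hx
    have e1 := Real.hasDerivAt_rpow_const (x := x) (p := p₂) (Or.inl hx.ne')
    have e2 := Real.hasDerivAt_rpow_const (x := x) (p := p₁) (Or.inl hx.ne')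
    have e3 := Real.hasDerivAt_rpow_const (x := x) (p := α) (Or.inl hx.ne')
    have hid : HasDerivAt (fun y : ℝ => y - L) 1 x := (hasDerivAt_id x).sub_const L
    have := (((e1.const_mul p₁).sub (e2.const_mul p₂)).const_mul K).sub (hid.mul e3)
    refine HasDerivAt.congr_of_eventuallyEq this ?_
    filter_upwards with y using (hfun y)
  set F'' : ℝ → ℝ := fun x => K * (p₁ * (p₂ * ((p₂-1) * x^(p₂-1-1))) - p₂ * (p₁ * ((p₁-1) * x^(p₁-1-1))))
      - (1 * (α * x^(α-1)) + (1 * (α * x^(α-1)) + (x - L) * (α * ((α-1) * x^(α-1-1))))) with hF''def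
  have hder2 : ∀ x : ℝ, 0 < x → HasDerivAt F' (F'' x) x := by
    intro x hx
    have e1 := Real.hasDerivAt_rpow_const (x := x) (p := p₂ - 1) (Or.inl hx.ne')
    have e2 := Real.hasDerivAt_rpow_const (x := x) (p := p₁ - 1) (Or.inl hx.ne')
    have e3 := Real.hasDerivAt_rpow_const (x := x) (p := α) (Or.inl hx.ne')
    have e4 := Real.hasDerivAt_rpow_const (x := x) (p := α - 1) (Or.inl hx.ne')
    have hid : HasDerivAt (fun y : ℝ => y - L) 1 x := (hasDerivAt_id x).sub_const L
    exact ((((e1.const_mul p₂).const_mul p₁).sub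
      ((e2.const_mul p₁).const_mul p₂)).const_mul K).sub
      ((e3.const_mul 1).add (hid.mul (e4.const_mul α)))
  -- second derivative equals the positive expression
  have heq : ∀ x ∈ Set.Ioo (1:ℝ) b, F'' x =
      (b^α * (b - L) * p₁ * p₂ / (p₁ * b^p₂ - p₂ * b^p₁))
            * ((p₂ - 1) * x^(p₂-2) - (p₁ - 1) * x^(p₁-2))
          - (x^(α-2)/σ^4) * ((2*r - σ^2) * (2*r*x + L * (2*σ^2 - 2*r))) := by
    intro x hx
    have hx0 : 0 < x := lt_trans one_pos hx.1
    have hK' : b^(α+1) - L * b^α = b^α * (b - L) := by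
      rw [Real.rpow_add hb0, Real.rpow_one]; ring
    have hxe : x^(α-1) = x^(α-2) * x := by
      rw [show α - 1 = α - 2 + 1 by ring, Real.rpow_add_one hx0.ne']
    show K * (p₁ * (p₂ * ((p₂-1) * x^(p₂-1-1))) - p₂ * (p₁ * ((p₁-1) * x^(p₁-1-1))))
      - (1 * (α * x^(α-1)) + (1 * (α * x^(α-1)) + (x - L) * (α * ((α-1) * x^(α-1-1))))) = _
    rw [show p₂ - 1 - 1 = p₂ - 2 by ring, show p₁ - 1 - 1 = p₁ - 2 by ring,
      show α - 1 - 1 = α - 2 by ring, hxe, hKdef, hK']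
    set X := x^(α-2) with hX
    set Bα := b^α with hBα
    rw [hα]
    field_simp
    ring
  have hcont : ContinuousOn h (Set.Icc (1:ℝ) b) := fun x hx =>
    ((hder x (lt_of_lt_of_le one_pos hx.1)).continuousAt).continuousWithinAt
  refine strictConvexOn_of_deriv2_pos (convex_Icc 1 b) hcont ?_
  intro x hx
  rw [interior_Icc] at hx
  have hx0 : 0 < x := lt_trans one_pos hx.1
  have hdd : deriv h =ᶠ[nhds x] F' := by
    filter_upwards [Ioi_mem_nhds hx0] with y hy
    exact (hder y hy).deriv
  have h2eq : deriv^[2] h x = deriv (deriv h) x := rfl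
  rw [h2eq, hdd.deriv_eq, (hder2 x hx0).deriv, heq x hx]
  exact key x ⟨hx.1.le, hx.2.le⟩
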